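/- Let r be a positive integer and let p be a real number with 1/2 < p ≤ 1. Let W be a binomial random variable with parameters r and p, i.e. P(W = k) = C(r,k) p^k (1-p)^{r-k} for 0 ≤ k ≤ r. Then the probability of a correct majority vote satisfies P(W ≥ r/2) ≥ p + (1-p)·(1 - exp(-(p - 1/2)^2 · log r)); equivalently, ∑_{k : r/2 ≤ k ≤ r} C(r,k) p^k (1-p)^{r-k} ≥ p + (1-p)·(1 - r^{-(p-1/2)^2}). -/

import Mathlib

open Finset

/-- Counting lemma: the binomial coefficients over the lower half sum to at most `2^(r-1)`. -/
lemma sum_choose_lower_half (r : ℕ) (hr : 1 ≤ r) :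
    ∑ k ∈ (range (r+1)).filter (fun k => 2*k < r), r.choose k ≤ 2^(r-1) := by
  set B := (range (r+1)).filter (fun k => 2*k < r) with hB
  set G := (range (r+1)).filter (fun k => r < 2*k) with hG
  have hsymm : ∑ k ∈ B, r.choose k = ∑ k ∈ G, r.choose k := by
    apply Finset.sum_nbij' (i := fun k => r - k) (j := fun k => r - k)
    · intro k hk
      simp only [hB, hG, mem_filter, mem_range] at hk ⊢
      omega
    · intro k hk
      simp only [hB, hG, mem_filter, mem_range] at hk ⊢
      omega
    · intro k hk
      simp only [hB, mem_filter, mem_range] at hk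
      omega
    · intro k hk
      simp only [hG, mem_filter, mem_range] at hk
      omega
    · intro k hk
      simp only [hB, mem_filter, mem_range] at hk
      rw [Nat.choose_symm (by omega)]
  have hdisj : Disjoint B G := by
    rw [Finset.disjoint_filter]
    intro k _ h
    omega
  have hsub : B ∪ G ⊆ range (r+1) :=
    Finset.union_subset (filter_subset _ _) (filter_subset _ _)
  have h1 : ∑ k ∈ B, r.choose k + ∑ k ∈ G, r.choose k ≤ 2^r := by
    rw [← Finset.sum_union hdisj]
    calc ∑ k ∈ B ∪ G, r.choose k ≤ ∑ k ∈ range (r+1), r.choose k :=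
          Finset.sum_le_sum_of_subset hsub
      _ = 2^r := Nat.sum_range_choose r
  have h2 : 2^(r-1) * 2 = 2^r := by
    rw [← pow_succ]; congr 1; omega
  omega

/-- Binomial majority-voting bound (Lemma 4): if `W ~ Binomial(r, p)` with `1/2 < p ≤ 1`,
then `P(W ≥ r/2) ≥ p + (1-p)·(1 - exp(-(p - 1/2)² · log r))`. -/
theorem majority_vote_bound (r : ℕ) (hr : 1 ≤ r) (p : ℝ) (hp : 1 / 2 < p) (hp1 : p ≤ 1) :
    p + (1 - p) * (1 - Real.exp (-(p - 1 / 2) ^ 2 * Real.log r)) ≤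
      ∑ k ∈ (Finset.range (r + 1)).filter (fun k : ℕ => (r : ℝ) / 2 ≤ (k : ℝ)),
        (r.choose k : ℝ) * p ^ k * (1 - p) ^ (r - k) := by
  have hq0 : (0:ℝ) ≤ 1 - p := by linarith
  have hp0 : (0:ℝ) ≤ p := by linarith
  have hqp : 1 - p ≤ p := by linarith
  set c : ℝ := (p - 1/2)^2 with hc
  have hc0 : 0 ≤ c := sq_nonneg _
  set E : ℝ := Real.exp (-c * Real.log r) with hE
  -- the full sum is 1
  have htot : ∑ k ∈ range (r+1), (r.choose k : ℝ) * p ^ k * (1 - p) ^ (r - k) = 1 := by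
    have h := add_pow p (1-p) r
    have h1 : p + (1 - p) = 1 := by ring
    rw [h1, one_pow] at h
    calc ∑ k ∈ range (r+1), (r.choose k : ℝ) * p ^ k * (1 - p) ^ (r - k)
        = ∑ k ∈ range (r+1), p ^ k * (1 - p) ^ (r - k) * (r.choose k : ℝ) := by
          apply Finset.sum_congr rfl; intro k _; ring
      _ = 1 := h.symm
  -- split the sum
  have hsplit := Finset.sum_filter_add_sum_filter_not (range (r+1))
      (fun k : ℕ => (r : ℝ) / 2 ≤ (k : ℝ))
      (fun k => (r.choose k : ℝ) * p ^ k * (1 - p) ^ (r - k))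
  -- the bad sum
  set Sbad := ∑ k ∈ (range (r+1)).filter (fun k : ℕ => ¬ ((r : ℝ) / 2 ≤ (k : ℝ))),
      (r.choose k : ℝ) * p ^ k * (1 - p) ^ (r - k) with hSbad
  suffices hkey : Sbad ≤ (1 - p) * E by
    rw [htot] at hsplit
    have hre : p + (1 - p) * (1 - E) = 1 - (1 - p) * E := by ring
    rw [hre]
    linarith
  -- rewrite the bad filter condition in ℕ terms
  have hfilt : (range (r+1)).filter (fun k : ℕ => ¬ ((r : ℝ) / 2 ≤ (k : ℝ)))
      = (range (r+1)).filter (fun k => 2*k < r) := by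
    apply Finset.filter_congr
    intro k _
    constructor
    · intro h
      by_contra hcon
      push_neg at h
      have : (r:ℝ) ≤ 2*k := by exact_mod_cast (by omega : r ≤ 2*k)
      linarith
    · intro h hcon
      have : (2*k : ℝ) < r := by exact_mod_cast h
      linarith
  rw [hfilt] at hSbad
  set m : ℕ := r/2 + 1 with hm
  set b : ℕ := r - m with hb
  set a : ℕ := m - 1 with ha
  have hab : a + b = r - 1 := by omega
  have hab2 : a = b ∨ a = b + 1 := by omega
  -- termwise bound
  have hterm : Sbad ≤ ∑ k ∈ (range (r+1)).filter (fun k => 2*k < r),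
      (r.choose k : ℝ) * (p ^ b * (1 - p) ^ m) := by
    rw [hSbad]
    apply Finset.sum_le_sum
    intro k hk
    simp only [mem_filter, mem_range] at hk
    have hkb : k ≤ b := by omega
    have hrk : r - k = m + (b - k) := by omega
    have hbk : b = k + (b - k) := by omega
    have hchoose : (0:ℝ) ≤ (r.choose k : ℝ) := Nat.cast_nonneg _
    have hpow : p ^ k * (1 - p) ^ (r - k) ≤ p ^ b * (1 - p) ^ m := by
      have e1 : (1 - p) ^ (r - k) = (1 - p) ^ m * (1 - p) ^ (b - k) := by
        rw [hrk, pow_add]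
      have e2 : p ^ k * p ^ (b - k) = p ^ b := by
        rw [← pow_add]; congr 1; omega
      calc p ^ k * (1 - p) ^ (r - k) = p ^ k * (1 - p) ^ m * (1 - p) ^ (b - k) := by
            rw [e1]; ring
        _ ≤ p ^ k * (1 - p) ^ m * p ^ (b - k) := by
            apply mul_le_mul_of_nonneg_left (pow_le_pow_left₀ hq0 hqp _) (by positivity)
        _ = p ^ b * (1 - p) ^ m := by rw [← e2]; ring
    calc (r.choose k : ℝ) * p ^ k * (1 - p) ^ (r - k)
        = (r.choose k : ℝ) * (p ^ k * (1 - p) ^ (r - k)) := by ring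
      _ ≤ (r.choose k : ℝ) * (p ^ b * (1 - p) ^ m) :=
          mul_le_mul_of_nonneg_left hpow hchoose
  -- sum of choose bound
  have hcount : ∑ k ∈ (range (r+1)).filter (fun k => 2*k < r), (r.choose k : ℝ)
      ≤ (2:ℝ)^(r-1) := by
    have := sum_choose_lower_half r hr
    calc ∑ k ∈ (range (r+1)).filter (fun k => 2*k < r), (r.choose k : ℝ)
        = ((∑ k ∈ (range (r+1)).filter (fun k => 2*k < r), r.choose k : ℕ) : ℝ) := by
          push_cast; ring
      _ ≤ ((2^(r-1) : ℕ) : ℝ) := by exact_mod_cast this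
      _ = (2:ℝ)^(r-1) := by push_cast; ring
  have hpqm : (0:ℝ) ≤ p ^ b * (1 - p) ^ m := by positivity
  have hstep2 : Sbad ≤ (2:ℝ)^(r-1) * (p ^ b * (1 - p) ^ m) := by
    calc Sbad ≤ ∑ k ∈ (range (r+1)).filter (fun k => 2*k < r),
          (r.choose k : ℝ) * (p ^ b * (1 - p) ^ m) := hterm
      _ = (∑ k ∈ (range (r+1)).filter (fun k => 2*k < r), (r.choose k : ℝ))
          * (p ^ b * (1 - p) ^ m) := by rw [Finset.sum_mul]
      _ ≤ (2:ℝ)^(r-1) * (p ^ b * (1 - p) ^ m) :=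
          mul_le_mul_of_nonneg_right hcount hpqm
  -- key exponential estimates
  have h4pq : (2*p)*(2*(1-p)) ≤ Real.exp (-(4*c)) := by
    have heq : (2*p)*(2*(1-p)) = -(4*c) + 1 := by rw [hc]; ring
    rw [heq]
    exact Real.add_one_le_exp _
  have h2q : 2*(1-p) ≤ Real.exp (-(2*c)) := by
    have hcle : c ≤ p - 1/2 := by nlinarith
    have : 2*(1-p) ≤ -(2*c) + 1 := by linarith
    linarith [Real.add_one_le_exp (-(2*c))]
  have h2p0 : (0:ℝ) ≤ 2*p := by linarith
  have h2q0 : (0:ℝ) ≤ 2*(1-p) := by linarith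
  -- (2p)^b (2q)^a ≤ exp(-2c(a+b))
  have hmain : (2*p)^b * (2*(1-p))^a ≤ Real.exp (-(2*c) * (a+b)) := by
    have hprod : ((2*p)*(2*(1-p)))^b ≤ Real.exp (-(4*c))^b :=
      pow_le_pow_left₀ (by positivity) h4pq b
    have hexp4 : Real.exp (-(4*c))^b = Real.exp (-(4*c) * b) := by
      rw [← Real.exp_nat_mul]; ring_nf
    rcases hab2 with h | h
    · rw [h]
      calc (2*p)^b * (2*(1-p))^b = ((2*p)*(2*(1-p)))^b := by rw [← mul_pow]
        _ ≤ Real.exp (-(4*c))^b := hprod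
        _ = Real.exp (-(4*c) * b) := hexp4
        _ = Real.exp (-(2*c) * ((b:ℝ)+b)) := by ring_nf
    · rw [h]
      calc (2*p)^b * (2*(1-p))^(b+1)
          = ((2*p)*(2*(1-p)))^b * (2*(1-p)) := by rw [pow_succ, ← mul_assoc, ← mul_pow]
        _ ≤ Real.exp (-(4*c))^b * Real.exp (-(2*c)) := by
            apply mul_le_mul hprod h2q h2q0 (by positivity)
        _ = Real.exp (-(4*c) * b + -(2*c)) := by rw [hexp4, ← Real.exp_add]
        _ = Real.exp (-(2*c) * (((b:ℝ)+1)+b)) := by ring_nf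
        _ = Real.exp (-(2*c) * (((b+1:ℕ):ℝ)+b)) := by push_cast; ring_nf
  -- exp(-2c(r-1)) ≤ E
  have hlog : Real.log r ≤ 2 * ((r:ℝ) - 1) := by
    have hr0 : (0:ℝ) < r := by exact_mod_cast hr
    have h1 := Real.log_le_sub_one_of_pos hr0
    have hr1 : (1:ℝ) ≤ r := by exact_mod_cast hr
    linarith
  have hexpE : Real.exp (-(2*c) * (a+b)) ≤ E := by
    rw [hE]
    apply Real.exp_le_exp.mpr
    have hcast : ((a:ℝ) + b) = (r:ℝ) - 1 := by
      have h' : a + b + 1 = r := by omega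
      have h'' : ((a:ℝ) + b + 1) = (r:ℝ) := by exact_mod_cast h'
      linarith
    rw [hcast]
    nlinarith [mul_le_mul_of_nonneg_left hlog hc0]
  -- put it all together
  have hfinal : (2:ℝ)^(r-1) * (p ^ b * (1 - p) ^ m) ≤ (1 - p) * E := by
    have hm1 : m = a + 1 := by omega
    have h2pow : (2:ℝ)^(r-1) = 2^b * 2^a := by
      rw [← pow_add]; congr 1; omega
    have heq : (2:ℝ)^(r-1) * (p ^ b * (1 - p) ^ m)
        = (1 - p) * ((2*p)^b * (2*(1-p))^a) := by
      rw [hm1, h2pow, pow_succ, mul_pow, mul_pow]; ring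
    rw [heq]
    apply mul_le_mul_of_nonneg_left _ hq0
    exact le_trans hmain hexpE
  linarith
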